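/- Let c>0, Δ>0, D={(x,y): x²+y²<c²Δ²}, u(x,y)=c²Δ²−x²−y², and for μ>0 let p_μ(x,y) = (μ/(2πc)) e^{−μΔ+(μ/c)√(u(x,y))}/√(u(x,y)), g_μ = √(p_μ), and ψ_μ = (g_μ/2)(1/μ − Δ + √(u)/c). Then for every λ>0, (1/h²) ∬_D (g_{λ+h}(x,y) − g_λ(x,y) − h ψ_λ(x,y))² dx dy → 0 as h→0 (h ranging over values with λ+h>0). In other words, the square-root density λ ↦ g_λ is differentiable in L²(D) with derivative ψ_λ, i.e. the experiment generated by a planar random flight observed at time step Δ is regular. -/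

import Mathlib

open MeasureTheory Real

/-- The absolutely continuous density of a planar random flight at time step `Δ`,
speed `c` and Poisson rate `μ`, evaluated at the point `q` of the open disc of
radius `cΔ`. -/
noncomputable def prfDensity (c Δ μ : ℝ) (q : ℝ × ℝ) : ℝ :=
  μ / (2 * π * c) *
    Real.exp (-μ * Δ + μ / c * Real.sqrt (c ^ 2 * Δ ^ 2 - q.1 ^ 2 - q.2 ^ 2)) /
      Real.sqrt (c ^ 2 * Δ ^ 2 - q.1 ^ 2 - q.2 ^ 2)

namespace PRFAux

open Set

noncomputable def F (s μ : ℝ) : ℝ := Real.sqrt μ * Real.exp (μ * (s / 2))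
noncomputable def F₁ (s μ : ℝ) : ℝ :=
  Real.exp (μ * (s / 2)) * ((2 * Real.sqrt μ)⁻¹ + Real.sqrt μ * (s / 2))
noncomputable def F₂ (s μ : ℝ) : ℝ :=
  Real.exp (μ * (s / 2)) * ((s / 2) * ((2 * Real.sqrt μ)⁻¹ + Real.sqrt μ * (s / 2))
    + (s / (4 * Real.sqrt μ) - (4 * μ * Real.sqrt μ)⁻¹))

lemma hasDerivAt_F {s μ : ℝ} (hμ : 0 < μ) : HasDerivAt (F s) (F₁ s μ) μ := by
  have hsq : HasDerivAt Real.sqrt (1 / (2 * Real.sqrt μ)) μ := Real.hasDerivAt_sqrt hμ.ne'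
  have hexp : HasDerivAt (fun μ : ℝ => Real.exp (μ * (s / 2)))
      (Real.exp (μ * (s / 2)) * (s / 2)) μ := by
    simpa using ((hasDerivAt_id μ).mul_const (s / 2)).exp
  have := hsq.mul hexp
  refine this.congr_deriv (Eq.symm ?_)
  unfold F₁; ring

lemma hasDerivAt_F₁ {s μ : ℝ} (hμ : 0 < μ) : HasDerivAt (F₁ s) (F₂ s μ) μ := by
  have hsq : HasDerivAt Real.sqrt (1 / (2 * Real.sqrt μ)) μ := Real.hasDerivAt_sqrt hμ.ne'
  have hsqpos : 0 < Real.sqrt μ := Real.sqrt_pos.2 hμ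
  have hexp : HasDerivAt (fun μ : ℝ => Real.exp (μ * (s / 2)))
      (Real.exp (μ * (s / 2)) * (s / 2)) μ := by
    simpa using ((hasDerivAt_id μ).mul_const (s / 2)).exp
  have hinv : HasDerivAt (fun μ : ℝ => (2 * Real.sqrt μ)⁻¹)
      (-(2 * (1 / (2 * Real.sqrt μ))) / (2 * Real.sqrt μ) ^ 2) μ :=
    (hsq.const_mul 2).inv (by positivity)
  have hA : HasDerivAt (fun μ : ℝ => (2 * Real.sqrt μ)⁻¹ + Real.sqrt μ * (s / 2))
      (-(2 * (1 / (2 * Real.sqrt μ))) / (2 * Real.sqrt μ) ^ 2 + 1 / (2 * Real.sqrt μ) * (s / 2))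
      μ := hinv.add (hsq.mul_const (s / 2))
  have := hexp.mul hA
  refine this.congr_deriv (Eq.symm ?_)
  have hm : Real.sqrt μ * Real.sqrt μ = μ := Real.mul_self_sqrt hμ.le
  unfold F₂
  field_simp
  ring_nf
  linear_combination (-4) * hm

lemma exists_bound (Δ lam : ℝ) (hΔ : 0 < Δ) (hlam : 0 < lam) :
    ∃ K : ℝ, 0 ≤ K ∧ ∀ s ∈ Icc (-Δ) (0:ℝ), ∀ μ ∈ Icc (lam / 2) (2 * lam), |F₂ s μ| ≤ K := by
  have hcomp : IsCompact (Icc (-Δ) (0:ℝ) ×ˢ Icc (lam / 2) (2 * lam)) :=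
    (isCompact_Icc).prod isCompact_Icc
  have hsq : ∀ p : ℝ × ℝ, p ∈ Icc (-Δ) (0:ℝ) ×ˢ Icc (lam / 2) (2 * lam) →
      0 < Real.sqrt p.2 := by
    intro p hp
    exact Real.sqrt_pos.2 (lt_of_lt_of_le (by linarith) hp.2.1)
  have hcont : ContinuousOn (fun p : ℝ × ℝ => F₂ p.1 p.2)
      (Icc (-Δ) (0:ℝ) ×ˢ Icc (lam / 2) (2 * lam)) := by
    have c1 : Continuous (fun p : ℝ × ℝ => Real.sqrt p.2) :=
      Real.continuous_sqrt.comp continuous_snd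
    have c2 : Continuous (fun p : ℝ × ℝ => Real.exp (p.2 * (p.1 / 2))) := by fun_prop
    have chalf : Continuous (fun p : ℝ × ℝ => p.1 / 2) := by fun_prop
    have hne1 : ∀ p ∈ Icc (-Δ) (0:ℝ) ×ˢ Icc (lam / 2) (2 * lam), 2 * Real.sqrt p.2 ≠ 0 :=
      fun p hp => by have := hsq p hp; positivity
    have hne2 : ∀ p ∈ Icc (-Δ) (0:ℝ) ×ˢ Icc (lam / 2) (2 * lam), 4 * Real.sqrt p.2 ≠ 0 :=
      fun p hp => by have := hsq p hp; positivity
    have hne3 : ∀ p ∈ Icc (-Δ) (0:ℝ) ×ˢ Icc (lam / 2) (2 * lam), 4 * p.2 * Real.sqrt p.2 ≠ 0 :=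
      fun p hp => by
        have h1 := hsq p hp
        have h2 : 0 < p.2 := lt_of_lt_of_le (by linarith) hp.2.1
        positivity
    have cinv : ContinuousOn (fun p : ℝ × ℝ => (2 * Real.sqrt p.2)⁻¹)
        (Icc (-Δ) (0:ℝ) ×ˢ Icc (lam / 2) (2 * lam)) :=
      ContinuousOn.inv₀ (continuous_const.mul c1).continuousOn hne1
    have cinv2 : ContinuousOn (fun p : ℝ × ℝ => (4 * p.2 * Real.sqrt p.2)⁻¹)
        (Icc (-Δ) (0:ℝ) ×ˢ Icc (lam / 2) (2 * lam)) :=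
      ContinuousOn.inv₀ (((continuous_const.mul continuous_snd).mul c1)).continuousOn hne3
    have cdiv : ContinuousOn (fun p : ℝ × ℝ => p.1 / (4 * Real.sqrt p.2))
        (Icc (-Δ) (0:ℝ) ×ˢ Icc (lam / 2) (2 * lam)) :=
      ContinuousOn.div continuousOn_fst (continuous_const.mul c1).continuousOn hne2
    exact c2.continuousOn.mul ((chalf.continuousOn.mul
      (cinv.add (c1.continuousOn.mul chalf.continuousOn))).add (cdiv.sub cinv2))
  obtain ⟨K, hK⟩ := hcomp.exists_bound_of_continuousOn hcont
  refine ⟨max K 0, le_max_right _ _, fun s hs μ hμ => ?_⟩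
  exact le_trans (by simpa using hK (s, μ) (Set.mk_mem_prod hs hμ)) (le_max_left _ _)

lemma abs_mem_uIcc {lam h z : ℝ} (hz : z ∈ uIcc lam (lam + h)) : |z - lam| ≤ |h| := by
  rw [Set.mem_uIcc] at hz
  have h1 := le_abs_self h
  have h2 := neg_abs_le h
  rcases hz with ⟨ha, hb⟩ | ⟨ha, hb⟩ <;> rw [abs_le] <;> constructor <;> linarith

lemma taylor_bound {Δ lam K : ℝ} (hlam : 0 < lam) {s : ℝ}
    (hs : s ∈ Icc (-Δ) (0:ℝ)) (hK0 : 0 ≤ K)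
    (hK : ∀ s' ∈ Icc (-Δ) (0:ℝ), ∀ μ ∈ Icc (lam / 2) (2 * lam), |F₂ s' μ| ≤ K)
    {h : ℝ} (hh : |h| ≤ lam / 2) :
    |F s (lam + h) - F s lam - h * F₁ s lam| ≤ K * h ^ 2 := by
  have habs := abs_le.1 hh
  have hIsub : uIcc lam (lam + h) ⊆ Icc (lam / 2) (2 * lam) :=
    Set.uIcc_subset_Icc ⟨by linarith, by linarith⟩ ⟨by linarith, by linarith⟩
  have hpos : ∀ z ∈ uIcc lam (lam + h), 0 < z := fun z hz =>
    lt_of_lt_of_le (by linarith) (hIsub hz).1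
  have lip : ∀ z ∈ uIcc lam (lam + h), |F₁ s z - F₁ s lam| ≤ K * |h| := by
    intro z hz
    have hb := Convex.norm_image_sub_le_of_norm_hasDerivWithin_le
      (f := F₁ s) (f' := F₂ s) (C := K) (s := uIcc lam (lam + h))
      (fun x hx => (hasDerivAt_F₁ (hpos x hx)).hasDerivWithinAt)
      (fun x hx => by rw [Real.norm_eq_abs]; exact hK s hs x (hIsub hx))
      (convex_uIcc _ _) left_mem_uIcc hz
    rw [Real.norm_eq_abs, Real.norm_eq_abs] at hb
    exact hb.trans (mul_le_mul_of_nonneg_left (abs_mem_uIcc hz) hK0)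
  have hG : ∀ z ∈ uIcc lam (lam + h),
      HasDerivWithinAt (fun z => F s z - z * F₁ s lam) (F₁ s z - F₁ s lam)
        (uIcc lam (lam + h)) z := by
    intro z hz
    have := (hasDerivAt_F (s := s) (hpos z hz)).sub ((hasDerivAt_id z).mul_const (F₁ s lam))
    simp only [one_mul] at this
    exact this.hasDerivWithinAt
  have hb := Convex.norm_image_sub_le_of_norm_hasDerivWithin_le
    (f := fun z => F s z - z * F₁ s lam) (f' := fun z => F₁ s z - F₁ s lam)
    (C := K * |h|) (s := uIcc lam (lam + h)) hG
    (fun x hx => by rw [Real.norm_eq_abs]; exact lip x hx)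
    (convex_uIcc _ _) left_mem_uIcc right_mem_uIcc
  rw [Real.norm_eq_abs, Real.norm_eq_abs] at hb
  have e1 : F s (lam + h) - (lam + h) * F₁ s lam - (F s lam - lam * F₁ s lam)
      = F s (lam + h) - F s lam - h * F₁ s lam := by ring
  have e2 : lam + h - lam = h := by ring
  rw [e1, e2] at hb
  calc |F s (lam + h) - F s lam - h * F₁ s lam| ≤ K * |h| * |h| := hb
    _ = K * h ^ 2 := by rw [mul_assoc, ← abs_mul, abs_of_nonneg (mul_self_nonneg h), ← sq]

lemma sqrt_density_eq {c Δ μ : ℝ} (hc : 0 < c) (hμ : 0 < μ) {q : ℝ × ℝ}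
    (hq : q.1 ^ 2 + q.2 ^ 2 < c ^ 2 * Δ ^ 2) :
    Real.sqrt (prfDensity c Δ μ q)
      = Real.sqrt ((2 * π * c * Real.sqrt (c ^ 2 * Δ ^ 2 - q.1 ^ 2 - q.2 ^ 2))⁻¹)
        * F (-Δ + Real.sqrt (c ^ 2 * Δ ^ 2 - q.1 ^ 2 - q.2 ^ 2) / c) μ := by
  set w := Real.sqrt (c ^ 2 * Δ ^ 2 - q.1 ^ 2 - q.2 ^ 2) with hw
  have hwpos : 0 < w := Real.sqrt_pos.2 (by linarith)
  have hπ : (0:ℝ) < π := Real.pi_pos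
  have hkey : prfDensity c Δ μ q
      = (μ * Real.exp (μ * (-Δ + w / c))) * (2 * π * c * w)⁻¹ := by
    unfold prfDensity
    rw [← hw]
    rw [show -μ * Δ + μ / c * w = μ * (-Δ + w / c) by field_simp]
    field_simp
  rw [hkey, Real.sqrt_mul (by positivity), Real.sqrt_mul hμ.le, ← Real.exp_half]
  unfold F
  rw [show μ * (-Δ + w / c) / 2 = μ * ((-Δ + w / c) / 2) by ring]
  ring

lemma psi_eq {c Δ lam : ℝ} (hc : 0 < c) (hlam : 0 < lam) {q : ℝ × ℝ}
    (hq : q.1 ^ 2 + q.2 ^ 2 < c ^ 2 * Δ ^ 2) :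
    Real.sqrt (prfDensity c Δ lam q) / 2 *
        (1 / lam - Δ + Real.sqrt (c ^ 2 * Δ ^ 2 - q.1 ^ 2 - q.2 ^ 2) / c)
      = Real.sqrt ((2 * π * c * Real.sqrt (c ^ 2 * Δ ^ 2 - q.1 ^ 2 - q.2 ^ 2))⁻¹)
        * F₁ (-Δ + Real.sqrt (c ^ 2 * Δ ^ 2 - q.1 ^ 2 - q.2 ^ 2) / c) lam := by
  rw [sqrt_density_eq hc hlam hq]
  set w := Real.sqrt (c ^ 2 * Δ ^ 2 - q.1 ^ 2 - q.2 ^ 2) with hw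
  set B := Real.sqrt ((2 * π * c * w)⁻¹) with hB
  set s := -Δ + w / c with hs
  have h1 : 1 / lam - Δ + w / c = 1 / lam + s := by rw [hs]; ring
  rw [h1]
  unfold F F₁
  set t := Real.sqrt lam with ht
  have htpos : 0 < t := Real.sqrt_pos.2 hlam
  have ht2 : t ^ 2 = lam := Real.sq_sqrt hlam.le
  rw [← ht2]
  field_simp

lemma oneD {b : ℝ} (hb : 0 < b) :
    IntegrableOn (fun y : ℝ => (Real.sqrt (b ^ 2 - y ^ 2))⁻¹) (Ioo (-b) b) ∧
      ∫ y in Ioo (-b) b, (Real.sqrt (b ^ 2 - y ^ 2))⁻¹ = π := by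
  have hcont : ContinuousOn (fun y : ℝ => Real.arcsin (y / b)) (Icc (-b) b) :=
    (Real.continuous_arcsin.comp (continuous_id.div_const b)).continuousOn
  have hderiv : ∀ y ∈ Ioo (-b) b,
      HasDerivAt (fun y : ℝ => Real.arcsin (y / b)) ((Real.sqrt (b ^ 2 - y ^ 2))⁻¹) y := by
    intro y hy
    have hybpos : 0 < b ^ 2 - y ^ 2 := by nlinarith [hy.1, hy.2]
    have h1 : y / b ≠ -1 := by
      intro hcon
      rw [div_eq_iff hb.ne'] at hcon
      nlinarith [hy.1]
    have h2 : y / b ≠ 1 := by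
      intro hcon
      rw [div_eq_iff hb.ne'] at hcon
      nlinarith [hy.2]
    have hd := (Real.hasDerivAt_arcsin h1 h2).comp y ((hasDerivAt_id y).div_const b)
    refine hd.congr_deriv (Eq.symm ?_)
    have e1 : 1 - (y / b) ^ 2 = (b ^ 2 - y ^ 2) / b ^ 2 := by field_simp
    have e2 : Real.sqrt (1 - (y / b) ^ 2) = Real.sqrt (b ^ 2 - y ^ 2) / b := by
      rw [e1, Real.sqrt_div hybpos.le, Real.sqrt_sq hb.le]
    rw [e2]
    have hsq : 0 < Real.sqrt (b ^ 2 - y ^ 2) := Real.sqrt_pos.2 hybpos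
    field_simp
  have hnonneg : ∀ y ∈ Ioo (-b) b, (0:ℝ) ≤ (Real.sqrt (b ^ 2 - y ^ 2))⁻¹ :=
    fun y _ => by positivity
  have hint : IntegrableOn (fun y : ℝ => (Real.sqrt (b ^ 2 - y ^ 2))⁻¹) (Ioc (-b) b) :=
    intervalIntegral.integrableOn_deriv_of_nonneg hcont hderiv hnonneg
  have hintoo := hint.mono_set Ioo_subset_Ioc_self
  refine ⟨hintoo, ?_⟩
  have hii : IntervalIntegrable (fun y : ℝ => (Real.sqrt (b ^ 2 - y ^ 2))⁻¹) volume (-b) b :=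
    (intervalIntegrable_iff_integrableOn_Ioc_of_le (by linarith)).2 hint
  have hval := intervalIntegral.integral_eq_sub_of_hasDerivAt_of_le (by linarith : -b ≤ b)
    hcont hderiv hii
  rw [div_self hb.ne', show -b / b = -1 by field_simp, Real.arcsin_one, Real.arcsin_neg,
    Real.arcsin_one] at hval
  rw [← MeasureTheory.integral_Ioc_eq_integral_Ioo, ← intervalIntegral.integral_of_le
    (by linarith : -b ≤ b), hval]
  ring

lemma twoD {c Δ : ℝ} (hc : 0 < c) (hΔ : 0 < Δ) :
    IntegrableOn (fun q : ℝ × ℝ => (Real.sqrt (c ^ 2 * Δ ^ 2 - q.1 ^ 2 - q.2 ^ 2))⁻¹)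
      {q : ℝ × ℝ | q.1 ^ 2 + q.2 ^ 2 < c ^ 2 * Δ ^ 2} := by
  set a : ℝ := c * Δ with ha
  have hapos : 0 < a := by positivity
  have ha2 : a ^ 2 = c ^ 2 * Δ ^ 2 := by rw [ha]; ring
  set D : Set (ℝ × ℝ) := {q : ℝ × ℝ | q.1 ^ 2 + q.2 ^ 2 < c ^ 2 * Δ ^ 2} with hDdef
  have hD : MeasurableSet D :=
    (isOpen_lt (by fun_prop : Continuous fun q : ℝ × ℝ => q.1 ^ 2 + q.2 ^ 2)
      continuous_const).measurableSet
  have hmeas : Measurable (fun q : ℝ × ℝ => (Real.sqrt (c ^ 2 * Δ ^ 2 - q.1 ^ 2 - q.2 ^ 2))⁻¹) :=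
    ((Real.continuous_sqrt.comp
      (by fun_prop : Continuous fun q : ℝ × ℝ => c ^ 2 * Δ ^ 2 - q.1 ^ 2 - q.2 ^ 2))).measurable.inv
  refine ⟨(hmeas.aestronglyMeasurable).restrict, ?_⟩
  rw [hasFiniteIntegral_iff_ofReal (Filter.Eventually.of_forall fun q => by positivity)]
  rw [← lintegral_indicator hD]
  have hmeas2 : Measurable (fun q : ℝ × ℝ =>
      ENNReal.ofReal (Real.sqrt (c ^ 2 * Δ ^ 2 - q.1 ^ 2 - q.2 ^ 2))⁻¹) :=
    ENNReal.measurable_ofReal.comp hmeas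
  rw [MeasureTheory.Measure.volume_eq_prod, lintegral_prod _
    ((hmeas2.indicator hD).aemeasurable)]
  have hinner : ∀ x : ℝ,
      (∫⁻ y, D.indicator (fun q : ℝ × ℝ =>
          ENNReal.ofReal (Real.sqrt (c ^ 2 * Δ ^ 2 - q.1 ^ 2 - q.2 ^ 2))⁻¹) (x, y))
        ≤ (Ioo (-a) a).indicator (fun _ => ENNReal.ofReal π) x := by
    intro x
    by_cases hx : x ^ 2 < a ^ 2
    · set b : ℝ := Real.sqrt (c ^ 2 * Δ ^ 2 - x ^ 2) with hb
      have hbpos : 0 < b := Real.sqrt_pos.2 (by rw [← ha2]; linarith)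
      have hb2 : b ^ 2 = c ^ 2 * Δ ^ 2 - x ^ 2 := Real.sq_sqrt (by rw [← ha2]; linarith)
      have hxa : x ∈ Ioo (-a) a := by
        have := sq_lt_sq.1 hx
        rw [abs_of_pos hapos] at this
        constructor <;> [linarith [neg_abs_le x, le_abs_self x]; linarith [le_abs_self x]]
      have heq : ∀ y : ℝ, D.indicator (fun q : ℝ × ℝ =>
            ENNReal.ofReal (Real.sqrt (c ^ 2 * Δ ^ 2 - q.1 ^ 2 - q.2 ^ 2))⁻¹) (x, y)
          = (Ioo (-b) b).indicator
              (fun y => ENNReal.ofReal (Real.sqrt (b ^ 2 - y ^ 2))⁻¹) y := by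
        intro y
        have hmem : ((x, y) ∈ D) ↔ y ∈ Ioo (-b) b := by
          rw [hDdef]
          simp only [Set.mem_setOf_eq, Set.mem_Ioo]
          constructor
          · intro hlt
            have hy : y ^ 2 < b ^ 2 := by rw [hb2]; linarith
            have := sq_lt_sq.1 hy
            rw [abs_of_pos hbpos] at this
            constructor <;> [linarith [neg_abs_le y]; linarith [le_abs_self y]]
          · intro ⟨h1, h2⟩
            have : y ^ 2 < b ^ 2 := by
              rw [sq_lt_sq, abs_of_pos hbpos]
              exact abs_lt.2 ⟨h1, h2⟩
            rw [hb2] at this; linarith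
        by_cases hmy : (x, y) ∈ D
        · have harg : c ^ 2 * Δ ^ 2 - x ^ 2 - y ^ 2 = b ^ 2 - y ^ 2 := by rw [hb2]
          rw [Set.indicator_of_mem hmy, Set.indicator_of_mem (hmem.1 hmy), harg]
        · rw [Set.indicator_of_notMem hmy,
            Set.indicator_of_notMem (fun hcon => hmy (hmem.2 hcon))]
      rw [lintegral_congr heq, lintegral_indicator measurableSet_Ioo,
        Set.indicator_of_mem hxa]
      obtain ⟨hint1, hval1⟩ := oneD hbpos
      rw [← ofReal_integral_eq_lintegral_ofReal hint1
        (Filter.Eventually.of_forall fun y => by positivity), hval1]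
    · have hzero : ∀ y : ℝ, D.indicator (fun q : ℝ × ℝ =>
            ENNReal.ofReal (Real.sqrt (c ^ 2 * Δ ^ 2 - q.1 ^ 2 - q.2 ^ 2))⁻¹) (x, y) = 0 := by
        intro y
        apply Set.indicator_of_notMem
        rw [hDdef]
        simp only [Set.mem_setOf_eq, not_lt, ← ha2]
        nlinarith [sq_nonneg y, not_lt.1 hx]
      simp only [hzero, lintegral_zero]
      exact zero_le'
  calc ∫⁻ x, ∫⁻ y, D.indicator (fun q : ℝ × ℝ =>
          ENNReal.ofReal (Real.sqrt (c ^ 2 * Δ ^ 2 - q.1 ^ 2 - q.2 ^ 2))⁻¹) (x, y)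
      ≤ ∫⁻ x, (Ioo (-a) a).indicator (fun _ => ENNReal.ofReal π) x := lintegral_mono hinner
    _ = ENNReal.ofReal π * volume (Ioo (-a) a) :=
        lintegral_indicator_const measurableSet_Ioo _
    _ < ⊤ := by
        rw [Real.volume_Ioo]
        exact ENNReal.mul_lt_top ENNReal.ofReal_lt_top ENNReal.ofReal_lt_top

end PRFAux

open PRFAux Set

/-- Regularity of the experiment (Theorem 3.3): the square-root density
`λ ↦ √p_λ` is differentiable in `L²(D)` with derivative
`ψ_λ = (√p_λ / 2)(1/λ − Δ + √u / c)`. -/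
theorem sqrt_density_L2_differentiable (c Δ lam : ℝ)
    (hc : 0 < c) (hΔ : 0 < Δ) (hlam : 0 < lam) :
    Filter.Tendsto
      (fun h : ℝ => (1 / h ^ 2) *
        ∫ q in {q : ℝ × ℝ | q.1 ^ 2 + q.2 ^ 2 < c ^ 2 * Δ ^ 2},
          (Real.sqrt (prfDensity c Δ (lam + h) q) - Real.sqrt (prfDensity c Δ lam q) -
            h * (Real.sqrt (prfDensity c Δ lam q) / 2 *
              (1 / lam - Δ + Real.sqrt (c ^ 2 * Δ ^ 2 - q.1 ^ 2 - q.2 ^ 2) / c))) ^ 2)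
      (nhdsWithin 0 {h : ℝ | h ≠ 0 ∧ 0 < lam + h})
      (nhds 0) := by
  obtain ⟨K, hK0, hK⟩ := exists_bound Δ lam hΔ hlam
  have hπ := Real.pi_pos
  set D : Set (ℝ × ℝ) := {q : ℝ × ℝ | q.1 ^ 2 + q.2 ^ 2 < c ^ 2 * Δ ^ 2} with hDdef
  have hD : MeasurableSet D :=
    (isOpen_lt (by fun_prop : Continuous fun q : ℝ × ℝ => q.1 ^ 2 + q.2 ^ 2)
      continuous_const).measurableSet
  set G : ℝ × ℝ → ℝ :=
    fun q => (2 * π * c * Real.sqrt (c ^ 2 * Δ ^ 2 - q.1 ^ 2 - q.2 ^ 2))⁻¹ with hGdef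
  have hGint : IntegrableOn G D := by
    have h1 := (twoD hc hΔ).const_mul ((2 * π * c)⁻¹)
    have heqG : G = fun q : ℝ × ℝ =>
        (2 * π * c)⁻¹ * (Real.sqrt (c ^ 2 * Δ ^ 2 - q.1 ^ 2 - q.2 ^ 2))⁻¹ := by
      funext q
      exact mul_inv _ _
    rw [heqG]
    exact h1
  set C₀ : ℝ := ∫ q in D, G q with hC₀def
  have hC₀ : 0 ≤ C₀ := setIntegral_nonneg hD (fun q _ => by positivity)
  apply squeeze_zero' (g := fun h : ℝ => (K ^ 2 * C₀) * h ^ 2)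
  · exact Filter.Eventually.of_forall fun h =>
      mul_nonneg (by positivity) (integral_nonneg fun q => sq_nonneg _)
  · have hsmall : ∀ᶠ h : ℝ in nhdsWithin 0 {h : ℝ | h ≠ 0 ∧ 0 < lam + h}, |h| ≤ lam / 2 := by
      apply Filter.Eventually.filter_mono nhdsWithin_le_nhds
      filter_upwards [Metric.ball_mem_nhds (0:ℝ) (by positivity : (0:ℝ) < lam / 2)] with h hh
      rw [Metric.mem_ball, Real.dist_eq, sub_zero] at hh
      exact hh.le
    filter_upwards [hsmall, self_mem_nhdsWithin] with h hh hmem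
    obtain ⟨hne, hpos'⟩ := hmem
    have hpoint : ∀ q ∈ D,
        (Real.sqrt (prfDensity c Δ (lam + h) q) - Real.sqrt (prfDensity c Δ lam q) -
            h * (Real.sqrt (prfDensity c Δ lam q) / 2 *
              (1 / lam - Δ + Real.sqrt (c ^ 2 * Δ ^ 2 - q.1 ^ 2 - q.2 ^ 2) / c))) ^ 2
          ≤ (K ^ 2 * h ^ 4) * G q := by
      intro q hq
      have hq' : q.1 ^ 2 + q.2 ^ 2 < c ^ 2 * Δ ^ 2 := hq
      have hupos : 0 < c ^ 2 * Δ ^ 2 - q.1 ^ 2 - q.2 ^ 2 := by linarith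
      rw [psi_eq hc hlam hq', sqrt_density_eq hc hpos' hq', sqrt_density_eq hc hlam hq']
      set w := Real.sqrt (c ^ 2 * Δ ^ 2 - q.1 ^ 2 - q.2 ^ 2) with hw
      have hwpos : 0 < w := Real.sqrt_pos.2 hupos
      set s := -Δ + w / c with hs
      set B := Real.sqrt ((2 * π * c * w)⁻¹) with hB
      have hsmem : s ∈ Icc (-Δ) (0:ℝ) := by
        constructor
        · have : 0 ≤ w / c := by positivity
          rw [hs]; linarith
        · have hwle : w ≤ c * Δ := by
            rw [hw]
            calc Real.sqrt (c ^ 2 * Δ ^ 2 - q.1 ^ 2 - q.2 ^ 2)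
                ≤ Real.sqrt (c ^ 2 * Δ ^ 2) :=
                  Real.sqrt_le_sqrt (by nlinarith [sq_nonneg q.1, sq_nonneg q.2])
              _ = c * Δ := by
                  rw [show c ^ 2 * Δ ^ 2 = (c * Δ) ^ 2 by ring, Real.sqrt_sq (by positivity)]
          have : w / c ≤ Δ := by rw [div_le_iff₀ hc]; linarith
          rw [hs]; linarith
      have hfac : B * F s (lam + h) - B * F s lam - h * (B * F₁ s lam)
          = B * (F s (lam + h) - F s lam - h * F₁ s lam) := by ring
      rw [hfac, mul_pow]
      have hB2 : B ^ 2 = (2 * π * c * w)⁻¹ := Real.sq_sqrt (by positivity)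
      rw [hB2]
      have htay := taylor_bound hlam hsmem hK0 hK hh
      have hsq2 : (F s (lam + h) - F s lam - h * F₁ s lam) ^ 2 ≤ (K * h ^ 2) ^ 2 := by
        rw [← sq_abs]
        exact pow_le_pow_left₀ (abs_nonneg _) htay 2
      calc (2 * π * c * w)⁻¹ * (F s (lam + h) - F s lam - h * F₁ s lam) ^ 2
          ≤ (2 * π * c * w)⁻¹ * (K * h ^ 2) ^ 2 :=
            mul_le_mul_of_nonneg_left hsq2 (by positivity)
        _ = (K ^ 2 * h ^ 4) * G q := by simp only [hGdef]; rw [← hw]; ring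
    have hintle : (∫ q in D,
        (Real.sqrt (prfDensity c Δ (lam + h) q) - Real.sqrt (prfDensity c Δ lam q) -
            h * (Real.sqrt (prfDensity c Δ lam q) / 2 *
              (1 / lam - Δ + Real.sqrt (c ^ 2 * Δ ^ 2 - q.1 ^ 2 - q.2 ^ 2) / c))) ^ 2)
        ≤ ∫ q in D, (K ^ 2 * h ^ 4) * G q := by
      apply integral_mono_of_nonneg
      · exact Filter.Eventually.of_forall fun q => sq_nonneg _
      · exact (hGint.const_mul _)
      · exact (ae_restrict_iff' hD).2 (Filter.Eventually.of_forall hpoint)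
    rw [MeasureTheory.integral_const_mul] at hintle
    calc (1 / h ^ 2) * ∫ q in D,
        (Real.sqrt (prfDensity c Δ (lam + h) q) - Real.sqrt (prfDensity c Δ lam q) -
            h * (Real.sqrt (prfDensity c Δ lam q) / 2 *
              (1 / lam - Δ + Real.sqrt (c ^ 2 * Δ ^ 2 - q.1 ^ 2 - q.2 ^ 2) / c))) ^ 2
        ≤ (1 / h ^ 2) * (K ^ 2 * h ^ 4 * C₀) :=
          mul_le_mul_of_nonneg_left hintle (by positivity)
      _ = (K ^ 2 * C₀) * h ^ 2 := by field_simp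
  · have hg : Filter.Tendsto (fun h : ℝ => (K ^ 2 * C₀) * h ^ 2) (nhds 0) (nhds 0) := by
      have := (continuous_const.mul (continuous_pow 2) :
        Continuous fun h : ℝ => (K ^ 2 * C₀) * h ^ 2).tendsto 0
      simpa [Pi.mul_def] using this
    exact hg.mono_left nhdsWithin_le_nhds
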